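/- Assume (G,E,φ) is pseudo-free. Two germs [α₁,g₁,β₁; η₁] and [α₂,g₂,β₂; η₂] in the groupoid of germs of the S_{G,E}-action on E^∞ (with |β₁| ≤ |β₂|) are equal if and only if there exist a finite path γ and an infinite path ξ with α₂ = α₁(g₁·γ), g₂ = φ(g₁,γ), β₂ = β₁γ, and η₁ = η₂ = β₁γξ. -/

import Mathlib

noncomputable section

open scoped Classical

/-! ### Corona groups -/

section CoronaSec

variable (G : Type*) [Group G]

def eventuallyTrivial : Subgroup (ℕ → G) where
  carrier := {f | ∃ N, ∀ n, N ≤ n → f n = 1}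
  one_mem' := ⟨0, fun n _ => rfl⟩
  mul_mem' := by
    rintro a b ⟨N, hN⟩ ⟨M, hM⟩
    exact ⟨max N M, fun n hn => by
      simp [Pi.mul_apply, hN n (le_trans (le_max_left _ _) hn),
        hM n (le_trans (le_max_right _ _) hn)]⟩
  inv_mem' := by
    rintro a ⟨N, hN⟩
    exact ⟨N, fun n hn => by simp [Pi.inv_apply, hN n hn]⟩

instance eventuallyTrivial_normal : (eventuallyTrivial G).Normal := by
  constructor
  rintro a ⟨N, hN⟩ g
  exact ⟨N, fun n hn => by simp [Pi.mul_apply, Pi.inv_apply, hN n hn]⟩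

def lshift : (ℕ → G) →* (ℕ → G) where
  toFun f := fun n => f (n + 1)
  map_one' := rfl
  map_mul' a b := rfl

def rshift : (ℕ → G) →* (ℕ → G) where
  toFun f := fun n => if n = 0 then 1 else f (n - 1)
  map_one' := by funext n; by_cases h : n = 0 <;> simp [h]
  map_mul' a b := by funext n; by_cases h : n = 0 <;> simp [h]

lemma lshift_comap : eventuallyTrivial G ≤ (eventuallyTrivial G).comap (lshift G) := by
  rintro f ⟨N, hN⟩
  exact ⟨N, fun n hn => hN (n + 1) (by omega)⟩

lemma rshift_comap : eventuallyTrivial G ≤ (eventuallyTrivial G).comap (rshift G) := by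
  rintro f ⟨N, hN⟩
  refine ⟨N + 1, fun n hn => ?_⟩
  show (if n = 0 then 1 else f (n - 1)) = 1
  rw [if_neg (by omega)]
  exact hN (n - 1) (by omega)

abbrev Corona : Type _ := (ℕ → G) ⧸ eventuallyTrivial G

def coronaRho : Corona G →* Corona G :=
  QuotientGroup.map _ _ (rshift G) (rshift_comap G)

def coronaLam : Corona G →* Corona G :=
  QuotientGroup.map _ _ (lshift G) (lshift_comap G)

def coronaRhoZ : ℤ → Corona G → Corona G
  | Int.ofNat n => (⇑(coronaRho G))^[n]
  | Int.negSucc n => (⇑(coronaLam G))^[n + 1]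

end CoronaSec

/-! ### Graphs, paths and self-similar actions -/

structure SSGraph (V : Type*) (E : Type*) where
  r : E → V
  d : E → V

namespace SSGraph

variable {V E : Type*}

abbrev Pth (V E : Type*) := V × List E

def IsPath (Γ : SSGraph V E) (p : Pth V E) : Prop :=
  (∀ e ∈ p.2.head?, Γ.r e = p.1) ∧ p.2.Chain' fun a b => Γ.d a = Γ.r b

def src (Γ : SSGraph V E) (p : Pth V E) : V :=
  match p.2.getLast? with
  | none => p.1
  | some e => Γ.d e

def comp (p q : Pth V E) : Pth V E := (p.1, p.2 ++ q.2)

def ofVertex (v : V) : Pth V E := (v, [])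

def ofEdge (Γ : SSGraph V E) (e : E) : Pth V E := (Γ.r e, [e])

structure GraphAction (G : Type*) [Group G] (Γ : SSGraph V E) where
  actV : G → V → V
  actE : G → E → E
  actV_one : ∀ v, actV 1 v = v
  actV_mul : ∀ g h v, actV (g * h) v = actV g (actV h v)
  actE_one : ∀ e, actE 1 e = e
  actE_mul : ∀ g h e, actE (g * h) e = actE g (actE h e)
  r_act : ∀ g e, Γ.r (actE g e) = actV g (Γ.r e)
  d_act : ∀ g e, Γ.d (actE g e) = actV g (Γ.d e)

structure EdgeCocycle {G : Type*} [Group G] {Γ : SSGraph V E} (GA : GraphAction G Γ) where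
  φ : G → E → G
  cocycle : ∀ g h e, φ (g * h) e = φ g (GA.actE h e) * φ h e
  vertex_compat : ∀ g e v, GA.actV (φ g e) v = GA.actV g v

/-- The extension of a self-similar `(G,E,φ)`-datum to the set of all finite paths,
with all the properties listed in the extension proposition. -/
structure PathSystem {G : Type*} [Group G] {Γ : SSGraph V E} {GA : GraphAction G Γ}
    (c : EdgeCocycle GA) where
  act : G → Pth V E → Pth V E
  coc : G → Pth V E → G
  act_vertex : ∀ g v, act g (ofVertex v) = ofVertex (GA.actV g v)
  act_edge : ∀ g e, act g (Γ.ofEdge e) = Γ.ofEdge (GA.actE g e)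
  coc_vertex : ∀ g v, coc g (ofVertex v) = g
  coc_edge : ∀ g e, coc g (Γ.ofEdge e) = c.φ g e
  isPath_act : ∀ g p, Γ.IsPath p → Γ.IsPath (act g p)
  length_act : ∀ g p, Γ.IsPath p → (act g p).2.length = p.2.length
  ran_act : ∀ g p, Γ.IsPath p → (act g p).1 = GA.actV g p.1
  src_act : ∀ g p, Γ.IsPath p → Γ.src (act g p) = GA.actV g (Γ.src p)
  coc_vertex_act : ∀ g p v, Γ.IsPath p → GA.actV (coc g p) v = GA.actV g v
  act_one : ∀ p, Γ.IsPath p → act 1 p = p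
  act_mul : ∀ g h p, Γ.IsPath p → act (g * h) p = act g (act h p)
  coc_mul : ∀ g h p, Γ.IsPath p → coc (g * h) p = coc g (act h p) * coc h p
  act_comp : ∀ g p q, Γ.IsPath p → Γ.IsPath q → Γ.src p = q.1 →
    act g (comp p q) = comp (act g p) (act (coc g p) q)
  coc_comp : ∀ g p q, Γ.IsPath p → Γ.IsPath q → Γ.src p = q.1 →
    coc g (comp p q) = coc (coc g p) q

def PseudoFree {G : Type*} [Group G] {Γ : SSGraph V E} (GA : GraphAction G Γ)
    (c : EdgeCocycle GA) : Prop :=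
  ∀ g e, GA.actE g e = e → c.φ g e = 1 → g = 1

/-! ### The inverse semigroup `S_{G,E}` -/

def SgeCond {G : Type*} [Group G] (Γ : SSGraph V E) (GA : GraphAction G Γ)
    (t : Pth V E × G × Pth V E) : Prop :=
  Γ.IsPath t.1 ∧ Γ.IsPath t.2.2 ∧ Γ.src t.1 = GA.actV t.2.1 (Γ.src t.2.2)

def sgeSet {G : Type*} [Group G] (Γ : SSGraph V E) (GA : GraphAction G Γ) :
    Set (Option (Pth V E × G × Pth V E)) :=
  {x | x = none ∨ ∃ t, x = some t ∧ SgeCond Γ GA t}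

def sgeMulAux {G : Type*} [Group G] {Γ : SSGraph V E} {GA : GraphAction G Γ}
    {c : EdgeCocycle GA} (S : PathSystem c) :
    Pth V E × G × Pth V E → Pth V E × G × Pth V E → Option (Pth V E × G × Pth V E) :=
  fun x y =>
    if x.2.2.1 = y.1.1 ∧ x.2.2.2 <+: y.1.2 then
      let ε : Pth V E := (Γ.src x.2.2, y.1.2.drop x.2.2.2.length)
      some (comp x.1 (S.act x.2.1 ε), S.coc x.2.1 ε * y.2.1, y.2.2)
    else if y.1.1 = x.2.2.1 ∧ y.1.2 <+: x.2.2.2 then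
      let ε : Pth V E := (Γ.src y.1, x.2.2.2.drop y.1.2.length)
      some (x.1, x.2.1 * (S.coc y.2.1⁻¹ ε)⁻¹, comp y.2.2 (S.act y.2.1⁻¹ ε))
    else none

def sgeMul {G : Type*} [Group G] {Γ : SSGraph V E} {GA : GraphAction G Γ}
    {c : EdgeCocycle GA} (S : PathSystem c) :
    Option (Pth V E × G × Pth V E) → Option (Pth V E × G × Pth V E) →
      Option (Pth V E × G × Pth V E)
  | some x, some y => sgeMulAux S x y
  | _, _ => none

def sgeStar {G : Type*} [Group G] :
    Option (Pth V E × G × Pth V E) → Option (Pth V E × G × Pth V E)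
  | none => none
  | some t => some (t.2.2, t.2.1⁻¹, t.1)

/-! ### Infinite paths -/

def InfPath (Γ : SSGraph V E) (ξ : ℕ → E) : Prop :=
  ∀ n, Γ.d (ξ n) = Γ.r (ξ (n + 1))

/-- Truncation of an infinite path: the finite path formed by its first `n` edges.
(Index `n` of the sequence is the `(n+1)`-st edge of the path.) -/
def trunc (Γ : SSGraph V E) (ξ : ℕ → E) (n : ℕ) : Pth V E :=
  (Γ.r (ξ 0), (List.range n).map ξ)

/-- Concatenation `αξ` of a finite path with an infinite path. -/
def compInf (α : Pth V E) (ξ : ℕ → E) : ℕ → E :=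
  fun n => α.2.getD n (ξ (n - α.2.length))

/-- `Phi S g ξ n = φ(g, ξ|_n)`, i.e. the entry of the sequence `Φ(g,ξ) ∈ G^∞` at the
`(n+1)`-st position in the 1-based indexing of the paper. -/
def Phi {G : Type*} [Group G] {Γ : SSGraph V E} {GA : GraphAction G Γ}
    {c : EdgeCocycle GA} (S : PathSystem c) (g : G) (ξ : ℕ → E) : ℕ → G :=
  fun n => S.coc g (Γ.trunc ξ n)

/-- The extension of the self-similar action to infinite paths. -/
structure InfAction {G : Type*} [Group G] {Γ : SSGraph V E} {GA : GraphAction G Γ}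
    {c : EdgeCocycle GA} (S : PathSystem c) where
  a : G → (ℕ → E) → (ℕ → E)
  isInf : ∀ g ξ, Γ.InfPath ξ → Γ.InfPath (a g ξ)
  a_one : ∀ ξ, Γ.InfPath ξ → a 1 ξ = ξ
  a_mul : ∀ g h ξ, Γ.InfPath ξ → a (g * h) ξ = a g (a h ξ)
  trunc_a : ∀ g ξ n, Γ.InfPath ξ → Γ.trunc (a g ξ) n = S.act g (Γ.trunc ξ n)

/-- `η` belongs to the cylinder `Z(β)`. -/
def InCyl (Γ : SSGraph V E) (β : Pth V E) (η : ℕ → E) : Prop :=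
  Γ.r (η 0) = β.1 ∧ ∀ n (hn : n < β.2.length), η n = β.2[n]'hn

/-- Equality of germs `[α₁,g₁,β₁; η₁] = [α₂,g₂,β₂; η₂]` for the action of `S_{G,E}`
on the infinite path space. -/
def germEqv {G : Type*} [Group G] {Γ : SSGraph V E} {GA : GraphAction G Γ}
    {c : EdgeCocycle GA} (S : PathSystem c)
    (α₁ : Pth V E) (g₁ : G) (β₁ : Pth V E) (η₁ : ℕ → E)
    (α₂ : Pth V E) (g₂ : G) (β₂ : Pth V E) (η₂ : ℕ → E) : Prop :=
  η₁ = η₂ ∧ ∃ δ : Pth V E, Γ.IsPath δ ∧ Γ.InCyl δ η₁ ∧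
    sgeMul S (some (α₁, g₁, β₁)) (some (δ, 1, δ)) =
      sgeMul S (some (α₂, g₂, β₂)) (some (δ, 1, δ))

/-- The partial isometry `s_α` associated to a finite path. -/
def sPath {A : Type*} [Monoid A] (pv : V → A) (se : E → A) : Pth V E → A :=
  fun x =>
    match x with
    | (v, []) => pv v
    | (_, es) => (es.map se).prod

end SSGraph

end

section GermHelpers

open SSGraph

variable {V E G : Type*} [Group G] {Γ : SSGraph V E} {GA : SSGraph.GraphAction G Γ}
  {c : SSGraph.EdgeCocycle GA} (S : PathSystem c)

private lemma chain'_iff_getElem' {α : Type*} (R : α → α → Prop) (l : List α) :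
    l.Chain' R ↔ ∀ i (h : i + 1 < l.length), R l[i] l[i+1] :=
  List.isChain_iff_getElem.trans ⟨fun h i hi => h i (by omega), fun h i hi => h i (by omega)⟩

lemma coc_one' (p : Pth V E) (hp : Γ.IsPath p) : S.coc 1 p = 1 := by
  have h := S.coc_mul 1 1 p hp
  rw [one_mul, S.act_one p hp] at h
  exact (left_eq_mul.mp h)

lemma src_eq_of_getLast {p : Pth V E} {e : E} (h : p.2.getLast? = some e) :
    Γ.src p = Γ.d e := by
  unfold SSGraph.src
  rw [h]

lemma src_eq_of_nil {p : Pth V E} (h : p.2 = []) : Γ.src p = p.1 := by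
  unfold SSGraph.src
  rw [h]
  rfl

lemma src_comp_right (p q : Pth V E) (hq : q.2 ≠ []) :
    Γ.src (SSGraph.comp p q) = Γ.src q := by
  rcases hgl : q.2.getLast? with _ | e
  · exact absurd (List.getLast?_eq_none_iff.mp hgl) hq
  · rw [src_eq_of_getLast hgl, src_eq_of_getLast (p := SSGraph.comp p q)
      (by show (p.2 ++ q.2).getLast? = some e
          rwa [List.getLast?_append_of_ne_nil p.2 hq])]

lemma isPath_ofEdge (e : E) : Γ.IsPath (Γ.ofEdge e) := by
  constructor
  · intro e' he'
    simp [SSGraph.ofEdge] at he'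
    subst he'; rfl
  · simp [SSGraph.ofEdge]; exact List.isChain_singleton _

lemma pf_path (hpf : PseudoFree GA c) :
    ∀ (l : List E) (v : V) (h : G), Γ.IsPath (v, l) →
      (S.act h (v, l)).2 = l → S.coc h (v, l) = 1 → h = 1 := by
  intro l
  induction l with
  | nil =>
    intro v h _ _ hcoc
    rwa [show ((v, []) : Pth V E) = SSGraph.ofVertex v from rfl, S.coc_vertex] at hcoc
  | cons e l ih =>
    intro v h hp hact hcoc
    have hre : Γ.r e = v := hp.1 e rfl
    have hp2 : Γ.IsPath ((Γ.d e, l) : Pth V E) := by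
      constructor
      · intro e' he'
        cases l with
        | nil => simp at he'
        | cons f l' =>
          simp at he'
          subst he'
          exact (List.isChain_cons_cons.mp hp.2).1.symm
      · exact hp.2.tail
    have hdecomp : ((v, e :: l) : Pth V E) = SSGraph.comp (Γ.ofEdge e) (Γ.d e, l) := by
      simp [SSGraph.comp, SSGraph.ofEdge, hre]
    have hsrcE : Γ.src (Γ.ofEdge e) = Γ.d e := by
      simp [SSGraph.src, SSGraph.ofEdge]
    rw [hdecomp, S.act_comp _ _ _ (isPath_ofEdge e) hp2 hsrcE, S.act_edge, S.coc_edge] at hact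
    rw [hdecomp, S.coc_comp _ _ _ (isPath_ofEdge e) hp2 hsrcE, S.coc_edge] at hcoc
    simp only [SSGraph.comp, SSGraph.ofEdge, List.cons_append, List.nil_append,
      List.cons.injEq] at hact
    have h1 : c.φ h e = 1 := ih (Γ.d e) (c.φ h e) hp2 hact.2 hcoc
    exact hpf h e hact.1 h1

variable {η : ℕ → E}

lemma isPath_eta (hη : Γ.InfPath η) (a : ℕ) (v : V) (l : List E)
    (hv : v = Γ.r (η a)) (hl : ∀ n (h : n < l.length), l[n] = η (a + n)) :
    Γ.IsPath (v, l) := by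
  constructor
  · intro e he
    cases l with
    | nil => simp at he
    | cons f l' =>
      simp at he
      subst he
      have h0 := hl 0 (by simp)
      simp only [List.getElem_cons_zero] at h0
      rw [h0, hv]
      simp
  · rw [chain'_iff_getElem']
    intro i hi
    have hi' : i + 1 < l.length := hi
    rw [hl i (by omega), hl (i+1) hi', show a + (i+1) = (a+i)+1 by ring]
    exact hη (a+i)

lemma src_eta (hη : Γ.InfPath η) (a : ℕ) (v : V) (l : List E)
    (hv : v = Γ.r (η a)) (hl : ∀ n (h : n < l.length), l[n] = η (a + n)) :
    Γ.src (v, l) = Γ.r (η (a + l.length)) := by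
  rcases eq_or_ne l [] with rfl | hne
  · simpa [src_eq_of_nil (p := ((v, []) : Pth V E)) rfl] using hv
  · have hlt : l.length - 1 < l.length := by
      have : l.length ≠ 0 := fun h => hne (List.eq_nil_of_length_eq_zero h)
      omega
    have hlast : l.getLast? = some (l[l.length - 1]'hlt) := by
      rw [List.getLast?_eq_getElem?]
      exact List.getElem?_eq_getElem hlt
    rw [src_eq_of_getLast (p := ((v, l) : Pth V E)) hlast, hl _ hlt,
      hη (a + (l.length - 1)), show a + (l.length - 1) + 1 = a + l.length by omega]

lemma incyl_prefix {p q : Pth V E} (hp : Γ.InCyl p η) (hq : Γ.InCyl q η)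
    (h : p.2.length ≤ q.2.length) : p.2 <+: q.2 := by
  rw [List.prefix_iff_eq_take]
  apply List.ext_getElem (by simp; omega)
  intro n h1 h2
  rw [List.getElem_take, ← hp.2 n h1, ← hq.2 n (by omega)]

lemma sge_eval1 (a b p q : Pth V E) (g h : G) (hc : b.1 = p.1 ∧ b.2 <+: p.2) :
    sgeMul S (some (a, g, b)) (some (p, h, q)) =
      some (SSGraph.comp a (S.act g (Γ.src b, p.2.drop b.2.length)),
        S.coc g (Γ.src b, p.2.drop b.2.length) * h, q) := by
  show sgeMulAux S _ _ = _
  unfold sgeMulAux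
  rw [if_pos hc]

lemma sge_eval2 (a b p q : Pth V E) (g h : G)
    (h1 : ¬(b.1 = p.1 ∧ b.2 <+: p.2)) (h2 : p.1 = b.1 ∧ p.2 <+: b.2) :
    sgeMul S (some (a, g, b)) (some (p, h, q)) =
      some (a, g * (S.coc h⁻¹ (Γ.src p, b.2.drop p.2.length))⁻¹,
        SSGraph.comp q (S.act h⁻¹ (Γ.src p, b.2.drop p.2.length))) := by
  show sgeMulAux S _ _ = _
  unfold sgeMulAux
  rw [if_neg h1, if_pos h2]

end GermHelpers

open SSGraph in
theorem germ_equality_criterion {V E G : Type*} [Group G] [Countable G] [Fintype V] [Fintype E]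
    (Γ : SSGraph V E) (hns : ∀ v : V, ∃ e, Γ.r e = v)
    (GA : SSGraph.GraphAction G Γ) (c : SSGraph.EdgeCocycle GA)
    (S : PathSystem c) (hpf : PseudoFree GA c) :
    ∀ (α₁ : Pth V E) (g₁ : G) (β₁ : Pth V E) (η₁ : ℕ → E)
      (α₂ : Pth V E) (g₂ : G) (β₂ : Pth V E) (η₂ : ℕ → E),
      SgeCond Γ GA (α₁, g₁, β₁) → SgeCond Γ GA (α₂, g₂, β₂) →
      Γ.InfPath η₁ → Γ.InfPath η₂ → Γ.InCyl β₁ η₁ → Γ.InCyl β₂ η₂ →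
      β₁.2.length ≤ β₂.2.length →
      (germEqv S α₁ g₁ β₁ η₁ α₂ g₂ β₂ η₂ ↔
        ∃ (γ : Pth V E) (ξ : ℕ → E), Γ.IsPath γ ∧ Γ.InfPath ξ ∧
          Γ.src β₁ = γ.1 ∧ Γ.src γ = Γ.r (ξ 0) ∧
          α₂ = comp α₁ (S.act g₁ γ) ∧
          g₂ = S.coc g₁ γ ∧
          β₂ = comp β₁ γ ∧
          η₁ = η₂ ∧ η₁ = compInf (comp β₁ γ) ξ) := by
  intro α₁ g₁ β₁ η₁ α₂ g₂ β₂ η₂ h1 h2 hinf1 hinf2 hc1 hc2 hlen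
  obtain ⟨hα₁p, hβ₁p, hsrc₁⟩ := h1
  obtain ⟨hα₂p, hβ₂p, hsrc₂⟩ := h2
  constructor
  · rintro ⟨rfl, δ, hδp, hδc, hmul⟩
    -- notation
    set γ : Pth V E := (Γ.src β₁, β₂.2.drop β₁.2.length) with hγdef
    -- facts independent of the germ equality
    have hsrcβ₁ : Γ.src β₁ = Γ.r (η₁ β₁.2.length) := by
      have := src_eta hinf1 0 β₁.1 β₁.2 hc1.1.symm
        (fun n h => by simpa using (hc1.2 n h).symm)
      simpa using this
    have hsrcβ₂ : Γ.src β₂ = Γ.r (η₁ β₂.2.length) := by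
      have := src_eta hinf1 0 β₂.1 β₂.2 hc2.1.symm
        (fun n h => by simpa using (hc2.2 n h).symm)
      simpa using this
    have hγent : ∀ n (h : n < γ.2.length), γ.2[n] = η₁ (β₁.2.length + n) := by
      intro n h
      have hh : β₁.2.length + n < β₂.2.length := by
        simp only [hγdef, List.length_drop] at h; omega
      show (β₂.2.drop β₁.2.length)[n]'_ = _
      rw [List.getElem_drop]
      exact (hc2.2 _ hh).symm
    have hγp : Γ.IsPath γ := isPath_eta hinf1 β₁.2.length _ _ hsrcβ₁ hγent
    have hγlen : β₁.2.length + γ.2.length = β₂.2.length := by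
      simp only [hγdef, List.length_drop]; omega
    have hsrcγ : Γ.src γ = Γ.r (η₁ β₂.2.length) := by
      have := src_eta hinf1 β₁.2.length γ.1 γ.2 hsrcβ₁ hγent
      rw [hγlen] at this
      exact this
    have hβ₂γ : β₂ = SSGraph.comp β₁ γ := by
      obtain ⟨t, ht⟩ := incyl_prefix hc1 hc2 hlen
      apply Prod.ext
      · show β₂.1 = β₁.1
        rw [← hc1.1, ← hc2.1]
      · show β₂.2 = β₁.2 ++ β₂.2.drop β₁.2.length
        rw [← ht, List.drop_left]
    have hcompInf : η₁ = compInf β₂ (fun n => η₁ (n + β₂.2.length)) := by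
      funext n
      show η₁ n = β₂.2.getD n _
      by_cases h : n < β₂.2.length
      · rw [List.getD_eq_getElem _ _ h]
        exact hc2.2 n h
      · rw [List.getD_eq_default _ _ (by omega)]
        congr 1
        omega
    have hξinf : Γ.InfPath (fun n => η₁ (n + β₂.2.length)) := by
      intro n
      show Γ.d (η₁ (n + β₂.2.length)) = Γ.r (η₁ (n + 1 + β₂.2.length))
      rw [show n + 1 + β₂.2.length = n + β₂.2.length + 1 by ring]
      exact hinf1 (n + β₂.2.length)
    -- key facts from the germ equality
    have hkey : α₂ = SSGraph.comp α₁ (S.act g₁ γ) ∧ g₂ = S.coc g₁ γ := by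
      rcases le_or_gt β₂.2.length δ.2.length with hcase | hcase
      · -- both products fall in the first case
        have hpre1 : β₁.2 <+: δ.2 := incyl_prefix hc1 hδc (le_trans hlen hcase)
        have hpre2 : β₂.2 <+: δ.2 := incyl_prefix hc2 hδc hcase
        have hv1 : β₁.1 = δ.1 := by rw [← hc1.1, hδc.1]
        have hv2 : β₂.1 = δ.1 := by rw [← hc2.1, hδc.1]
        rw [sge_eval1 S _ _ _ _ _ _ ⟨hv1, hpre1⟩,
          sge_eval1 S _ _ _ _ _ _ ⟨hv2, hpre2⟩] at hmul
        set ε₂ : Pth V E := (Γ.src β₂, δ.2.drop β₂.2.length) with hε₂def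
        have hε₂p : Γ.IsPath ε₂ := by
          refine isPath_eta hinf1 β₂.2.length _ _ hsrcβ₂ ?_
          intro n h
          have hh : β₂.2.length + n < δ.2.length := by
            simp only [hε₂def, List.length_drop] at h; omega
          show (δ.2.drop β₂.2.length)[n]'_ = _
          rw [List.getElem_drop]
          exact (hδc.2 _ hh).symm
        have hsplitδ : δ.2.drop β₁.2.length = γ.2 ++ δ.2.drop β₂.2.length := by
          obtain ⟨t, ht⟩ := hpre2
          show δ.2.drop β₁.2.length = β₂.2.drop β₁.2.length ++ δ.2.drop β₂.2.length
          rw [← ht, List.drop_append_of_le_length hlen, List.drop_left]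
        have hε₁ : ((Γ.src β₁, δ.2.drop β₁.2.length) : Pth V E) = SSGraph.comp γ ε₂ :=
          Prod.ext rfl hsplitδ
        have hsγε : Γ.src γ = ε₂.1 := by rw [hsrcγ, hε₂def, hsrcβ₂]
        rw [hε₁, S.act_comp _ _ _ hγp hε₂p hsγε, S.coc_comp _ _ _ hγp hε₂p hsγε] at hmul
        simp only [Option.some.injEq, Prod.mk.injEq, mul_one, and_true] at hmul
        obtain ⟨hfst, hcoc⟩ := hmul
        set k := S.coc g₁ γ with hkdef
        have hfst1 : α₁.1 = α₂.1 := by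
          have h := congrArg (fun x : Pth V E => x.1) hfst
          exact h
        have hfst2 : (α₁.2 ++ (S.act g₁ γ).2) ++ (S.act k ε₂).2
            = α₂.2 ++ (S.act g₂ ε₂).2 := by
          have this := congrArg (fun x : Pth V E => x.2) hfst
          simp only [SSGraph.comp] at this
          rw [← List.append_assoc] at this
          exact this
        have hlens : (S.act k ε₂).2.length = (S.act g₂ ε₂).2.length := by
          rw [S.length_act _ _ hε₂p, S.length_act _ _ hε₂p]
        obtain ⟨hαlist, hactlist⟩ := List.append_inj' hfst2 hlens
        have hα₂ : α₂ = SSGraph.comp α₁ (S.act g₁ γ) :=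
          Prod.ext hfst1.symm hαlist.symm
        -- the vertex equality
        have hvg : GA.actV g₁ (Γ.src β₂) = GA.actV g₂ (Γ.src β₂) := by
          by_cases hγnil : γ.2 = []
          · have hnn : β₁.2.length = β₂.2.length := by
              rw [← hγlen, hγnil]; simp
            have hsrcEq : Γ.src β₂ = Γ.src β₁ := by rw [hsrcβ₁, hsrcβ₂, hnn]
            have hγv : γ = SSGraph.ofVertex (Γ.src β₁) := Prod.ext rfl hγnil
            have hαeq : α₂ = (α₁.1, α₁.2) := by
              rw [hα₂, hγv, S.act_vertex]
              exact Prod.ext rfl (by simp [SSGraph.comp, SSGraph.ofVertex])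
            have hsα : Γ.src α₂ = Γ.src α₁ := by rw [hαeq]
            rw [hsrcEq, ← hsrc₁, ← hsα, hsrc₂, hsrcEq]
          · have hact_ne : (S.act g₁ γ).2 ≠ [] := by
              intro h
              have := S.length_act g₁ γ hγp
              rw [h] at this
              exact hγnil (List.eq_nil_of_length_eq_zero this.symm)
            have hsrcα₂ : Γ.src α₂ = GA.actV g₁ (Γ.src γ) := by
              rw [hα₂, src_comp_right _ _ hact_ne, S.src_act _ _ hγp]
            rw [← hsrc₂, hsrcα₂, hsrcγ, ← hsrcβ₂]
        have hactk : S.act k ε₂ = S.act g₂ ε₂ := by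
          refine Prod.ext ?_ hactlist
          rw [S.ran_act _ _ hε₂p, S.ran_act _ _ hε₂p]
          show GA.actV k (Γ.src β₂) = GA.actV g₂ (Γ.src β₂)
          rw [hkdef, S.coc_vertex_act g₁ γ _ hγp]
          exact hvg
        have hk1 : (S.act (g₂⁻¹ * k) ε₂).2 = ε₂.2 := by
          rw [S.act_mul _ _ _ hε₂p, hactk, ← S.act_mul _ _ _ hε₂p, inv_mul_cancel,
            S.act_one _ hε₂p]
        have hk2 : S.coc (g₂⁻¹ * k) ε₂ = 1 := by
          rw [S.coc_mul _ _ _ hε₂p, hactk, hcoc, ← S.coc_mul _ _ _ hε₂p, inv_mul_cancel,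
            coc_one' S _ hε₂p]
        have hone : g₂⁻¹ * k = 1 :=
          pf_path S hpf ε₂.2 ε₂.1 _ hε₂p hk1 hk2
        exact ⟨hα₂, inv_mul_eq_one.mp hone⟩
      · -- δ is strictly shorter than β₂
        have hpreδ2 : δ.2 <+: β₂.2 := incyl_prefix hδc hc2 hcase.le
        have hvδ2 : δ.1 = β₂.1 := by rw [← hδc.1, hc2.1]
        have hnot2 : ¬(β₂.1 = δ.1 ∧ β₂.2 <+: δ.2) := by
          rintro ⟨-, hp⟩
          have := hp.length_le
          omega
        have hsrcδ : Γ.src δ = Γ.r (η₁ δ.2.length) := by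
          have := src_eta hinf1 0 δ.1 δ.2 hδc.1.symm
            (fun n h => by simpa using (hδc.2 n h).symm)
          simpa using this
        have hεδ2p : Γ.IsPath ((Γ.src δ, β₂.2.drop δ.2.length) : Pth V E) := by
          refine isPath_eta hinf1 δ.2.length _ _ hsrcδ ?_
          intro n h
          have hh : δ.2.length + n < β₂.2.length := by
            simp only [List.length_drop] at h; omega
          show (β₂.2.drop δ.2.length)[n]'_ = _
          rw [List.getElem_drop]
          exact (hc2.2 _ hh).symm
        rw [sge_eval2 S _ _ _ _ _ _ hnot2 ⟨hvδ2, hpreδ2⟩] at hmul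
        rw [inv_one, S.act_one _ hεδ2p, coc_one' S _ hεδ2p, inv_one, mul_one] at hmul
        rcases le_or_gt β₁.2.length δ.2.length with hc3 | hc3
        · -- contradiction: third components have different lengths
          exfalso
          have hv1 : β₁.1 = δ.1 := by rw [← hc1.1, hδc.1]
          rw [sge_eval1 S _ _ _ _ _ _ ⟨hv1, incyl_prefix hc1 hδc hc3⟩] at hmul
          simp only [Option.some.injEq, Prod.mk.injEq] at hmul
          have h3 := hmul.2.2
          have := congrArg (fun x : Pth V E => x.2.length) h3
          simp only [SSGraph.comp, List.length_append, List.length_drop] at this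
          omega
        · -- both products fall in the second case
          have hpreδ1 : δ.2 <+: β₁.2 := incyl_prefix hδc hc1 hc3.le
          have hvδ1 : δ.1 = β₁.1 := by rw [← hδc.1, hc1.1]
          have hnot1 : ¬(β₁.1 = δ.1 ∧ β₁.2 <+: δ.2) := by
            rintro ⟨-, hp⟩
            have := hp.length_le
            omega
          have hεδ1p : Γ.IsPath ((Γ.src δ, β₁.2.drop δ.2.length) : Pth V E) := by
            refine isPath_eta hinf1 δ.2.length _ _ hsrcδ ?_
            intro n h
            have hh : δ.2.length + n < β₁.2.length := by
              simp only [List.length_drop] at h; omega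
            show (β₁.2.drop δ.2.length)[n]'_ = _
            rw [List.getElem_drop]
            exact (hc1.2 _ hh).symm
          rw [sge_eval2 S _ _ _ _ _ _ hnot1 ⟨hvδ1, hpreδ1⟩] at hmul
          rw [inv_one, S.act_one _ hεδ1p, coc_one' S _ hεδ1p, inv_one, mul_one] at hmul
          simp only [Option.some.injEq, Prod.mk.injEq] at hmul
          obtain ⟨hα, hg, h3⟩ := hmul
          have hlens : β₁.2.length = β₂.2.length := by
            have := congrArg (fun x : Pth V E => x.2.length) h3
            simp only [SSGraph.comp, List.length_append, List.length_drop] at this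
            omega
          have hγnil : β₂.2.drop β₁.2.length = [] := by
            apply List.drop_eq_nil_of_le
            omega
          have hγv : γ = SSGraph.ofVertex (Γ.src β₁) := Prod.ext rfl hγnil
          constructor
          · rw [← hα, hγv, S.act_vertex]
            exact Prod.ext rfl (by simp [SSGraph.comp, SSGraph.ofVertex])
          · rw [hγv, S.coc_vertex]
            exact hg.symm
    refine ⟨γ, fun n => η₁ (n + β₂.2.length), hγp, hξinf, rfl, ?_, hkey.1, hkey.2,
      hβ₂γ, rfl, ?_⟩
    · rw [hsrcγ]
      norm_num
    · rw [← hβ₂γ]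
      exact hcompInf
  · rintro ⟨γ, ξ, hγp, hξinf, hsγ, hsrcγξ, hα₂, hg₂, hβ₂, rfl, hηcomp⟩
    refine ⟨rfl, β₂, hβ₂p, hc2, ?_⟩
    have hpre : β₁.2 <+: β₂.2 := ⟨γ.2, by rw [hβ₂]; rfl⟩
    have hv : β₁.1 = β₂.1 := by rw [hβ₂]; rfl
    rw [sge_eval1 S _ _ _ _ _ _ ⟨hv, hpre⟩, sge_eval1 S _ _ _ _ _ _ ⟨rfl, List.prefix_refl _⟩]
    have hεγ : ((Γ.src β₁, β₂.2.drop β₁.2.length) : Pth V E) = γ := by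
      refine Prod.ext hsγ ?_
      show β₂.2.drop β₁.2.length = γ.2
      rw [hβ₂]
      show (β₁.2 ++ γ.2).drop β₁.2.length = γ.2
      exact List.drop_left
    rw [hεγ, List.drop_length, mul_one, mul_one,
      show ((Γ.src β₂, ([] : List E)) : Pth V E) = SSGraph.ofVertex (Γ.src β₂) from rfl,
      S.act_vertex, S.coc_vertex, hα₂, hg₂]
    refine congrArg some (Prod.ext ?_ rfl)
    show SSGraph.comp α₁ (S.act g₁ γ) =
      SSGraph.comp (SSGraph.comp α₁ (S.act g₁ γ)) (SSGraph.ofVertex _)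
    exact Prod.ext rfl (by simp [SSGraph.comp, SSGraph.ofVertex])
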